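/- Let T be a text, and fix a position r. Let j·d be the largest multiple of d smaller than r, and let L be the longest suffix of T[j·d-m+1 .. j·d] whose 2k-period is at most d. If a pattern P with |P| ≤ m has k-period at most d and HD(P, T[ℓ..r]) ≤ k with the occurrence ending at r (so ℓ = r-|P|+1), then the occurrence T[ℓ..r] is fully contained in L·T[j·d+1 .. r], i.e., ℓ > j·d - |L|. -/

import Mathlib

/-- Hamming distance between the length-`n` strings `X[0..n-1]` and `Y[0..n-1]`
(strings are given as functions `ℕ → α`). -/
def HDn {α : Type*} [DecidableEq α] (n : ℕ) (X Y : ℕ → α) : ℕ :=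
  hammingDist (fun i : Fin n => X i.val) (fun i : Fin n => Y i.val)

/-- `HD(S[ρ+1..n], S[1..n-ρ])`: Hamming distance between the length-`n` string
`S` shifted by `ρ` and itself. -/
def shiftHD {α : Type*} [DecidableEq α] (n : ℕ) (S : ℕ → α) (ρ : ℕ) : ℕ :=
  HDn (n - ρ) (fun i => S (ρ + i)) S

/-- The `k`-period of a length-`n` string `S`: the minimal `π > 0` with
`HD(S[π+1..n], S[1..n-π]) ≤ 2k`. -/
noncomputable def kPeriod {α : Type*} [DecidableEq α] (k n : ℕ) (S : ℕ → α) : ℕ :=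
  sInf {π | 0 < π ∧ shiftHD n S π ≤ 2 * k}


lemma HDn_triangle {α : Type*} [DecidableEq α] (n : ℕ) (X Y Z : ℕ → α) :
    HDn n X Z ≤ HDn n X Y + HDn n Y Z :=
  hammingDist_triangle _ _ _

lemma HDn_zero {α : Type*} [DecidableEq α] (X Y : ℕ → α) : HDn 0 X Y = 0 := by
  simp [HDn, hammingDist]

lemma HDn_le_of_le {α : Type*} [DecidableEq α] (a b c : ℕ) (X Y X' Y' : ℕ → α)
    (h : c + a ≤ b) (hX : ∀ i, i < a → X i = X' (c + i))
    (hY : ∀ i, i < a → Y i = Y' (c + i)) :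
    HDn a X Y ≤ HDn b X' Y' := by
  unfold HDn hammingDist
  apply Finset.card_le_card_of_injOn (fun i : Fin a => (⟨c + i.val, by omega⟩ : Fin b))
  · intro i hi
    simp only [Finset.mem_coe, Finset.mem_filter, Finset.mem_univ, true_and] at hi ⊢
    rw [← hX i.val i.isLt, ← hY i.val i.isLt]
    exact hi
  · intro i _ i' _ hii
    have : c + i.val = c + i'.val := congrArg Fin.val hii
    exact Fin.ext (by omega)

/-- Fix a position `r` of the (1-indexed) text `T`, let `j·d` be the largest
multiple of `d` smaller than `r`, and let `L` (of length `Llen`) be the longest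
suffix of `T[j·d-m+1 .. j·d]` whose `2k`-period is at most `d`. If a pattern `P`
of length `len ≤ m` has `k`-period at most `d` and has a `k`-mismatch occurrence
`T[ℓ..r]` ending at `r` (so `ℓ = r - len + 1`), then the occurrence is fully
contained in `L · T[j·d+1 .. r]`, i.e. `ℓ > j·d - Llen`. -/
theorem stmt6 {α : Type*} [DecidableEq α] (k d m j r len Llen : ℕ)
    (T P : ℕ → α)
    (hd0 : 0 < d) (hlen0 : 0 < len) (hlenm : len ≤ m) (hm : m ≤ j * d)
    (hj1 : j * d < r) (hj2 : r ≤ j * d + d)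
    (hP : kPeriod k len P ≤ d)
    (hocc : HDn len P (fun i => T (r - len + 1 + i)) ≤ k)
    (hLlen : Llen ≤ m)
    (hLmax : ∀ lam, lam ≤ m →
      kPeriod (2 * k) lam (fun i => T (j * d - lam + 1 + i)) ≤ d → lam ≤ Llen) :
    j * d - Llen < r - len + 1 := by
  by_cases hcase : len ≤ r - j * d
  · omega
  · set lam := len - (r - j * d) with hlam
    have hlam_m : lam ≤ m := by omega
    have hstart : j * d - lam + 1 = r - len + 1 := by
      have : len ≤ j * d := le_trans hlenm hm
      omega
    -- the candidate period from P
    set ρ := kPeriod k len P with hρ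
    have hne : {π | 0 < π ∧ shiftHD len P π ≤ 2 * k}.Nonempty := by
      refine ⟨len, hlen0, ?_⟩
      have : len - len = 0 := by omega
      rw [shiftHD, this, HDn_zero]
      omega
    have hmem : 0 < ρ ∧ shiftHD len P ρ ≤ 2 * k := by
      rw [hρ, kPeriod]; exact Nat.sInf_mem hne
    obtain ⟨hρ0, hρshift⟩ := hmem
    have hρd : ρ ≤ d := hP
    have hkey : kPeriod (2 * k) lam (fun i => T (j * d - lam + 1 + i)) ≤ d := by
      have hsb : shiftHD lam (fun i => T (j * d - lam + 1 + i)) ρ ≤ 2 * (2 * k) := by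
        rw [shiftHD, hstart]
        by_cases hρlam : lam ≤ ρ
        · have : lam - ρ = 0 := by omega
          rw [this, HDn_zero]; omega
        · push_neg at hρlam
          set ℓ := r - len + 1 with hℓ
          calc HDn (lam - ρ) (fun i => T (ℓ + (ρ + i))) (fun i => T (ℓ + i))
              ≤ HDn (lam - ρ) (fun i => T (ℓ + (ρ + i))) (fun i => P (ρ + i)) +
                HDn (lam - ρ) (fun i => P (ρ + i)) (fun i => T (ℓ + i)) :=
                HDn_triangle _ _ _ _
            _ ≤ HDn (lam - ρ) (fun i => T (ℓ + (ρ + i))) (fun i => P (ρ + i)) +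
                (HDn (lam - ρ) (fun i => P (ρ + i)) P +
                 HDn (lam - ρ) P (fun i => T (ℓ + i))) := by
                gcongr
                exact HDn_triangle _ _ _ _
            _ ≤ k + (2 * k + k) := by
                gcongr
                · -- first: shift by ρ inside an occurrence, compare with hocc (symm)
                  have h1 : HDn len (fun i => T (ℓ + i)) P ≤ k := by
                    rw [HDn, hammingDist_comm]; exact hocc
                  refine le_trans ?_ h1
                  apply HDn_le_of_le (lam - ρ) len ρ
                  · omega
                  · intro i hi; simp [add_assoc]
                  · intro i hi; rfl
                · -- middle: ≤ shiftHD len P ρ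
                  refine le_trans ?_ hρshift
                  rw [shiftHD]
                  apply HDn_le_of_le (lam - ρ) (len - ρ) 0
                  · omega
                  · intro i hi; simp
                  · intro i hi; simp
                · refine le_trans ?_ hocc
                  apply HDn_le_of_le (lam - ρ) len 0
                  · omega
                  · intro i hi; simp
                  · intro i hi; simp
            _ = 2 * (2 * k) := by ring
      have hle : kPeriod (2 * k) lam (fun i => T (j * d - lam + 1 + i)) ≤ ρ := by
        rw [kPeriod]
        exact Nat.sInf_le ⟨hρ0, hsb⟩
      exact le_trans hle hρd
    have := hLmax lam hlam_m hkey
    have : len ≤ j * d := le_trans hlenm hm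
    omega
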